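/- Let sinc(x) = sin(πx)/(πx) for x ≠ 0 and sinc(0) = 1, let θ > 0, and for f ∈ ℝ define N_θ(f) = #{k ∈ ℤ : |f − kθ| < 1/2}. Then for every f ∈ ℝ such that f − kθ ∉ {−1/2, 1/2} for all k ∈ ℤ, the symmetric partial sums converge: lim_{M→∞} Σ_{ℓ=−M}^{M} sinc(ℓ/θ) · exp(2πi·ℓ·f/θ) = θ · N_θ(f). -/

import Mathlib

open Real MeasureTheory Filter
open Complex Topology

/-- `_root_.sinc x = sin(πx)/(πx)` for `x ≠ 0`, and `_root_.sinc 0 = 1`. -/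
noncomputable def sinc (x : ℝ) : ℝ := if x = 0 then 1 else Real.sin (π * x) / (π * x)

lemma one_sub_exp_eq (x : ℝ) :
    1 - Complex.exp ((2 * π * x : ℝ) * Complex.I)
      = (2 * Real.sin (π * x) : ℝ) * Complex.exp ((π * x - π / 2 : ℝ) * Complex.I) := by
  rw [Complex.exp_mul_I, Complex.exp_mul_I]
  rw [← Complex.ofReal_cos, ← Complex.ofReal_sin, ← Complex.ofReal_cos, ← Complex.ofReal_sin]
  have hc : Real.cos (2 * π * x) = 1 - 2 * Real.sin (π * x) ^ 2 := by
    have h2 := Real.cos_two_mul' (π * x)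
    have h3 := Real.sin_sq_add_cos_sq (π * x)
    rw [show 2 * π * x = 2 * (π * x) by ring, h2]; nlinarith
  have hs : Real.sin (2 * π * x) = 2 * Real.sin (π * x) * Real.cos (π * x) := by
    rw [show 2 * π * x = 2 * (π * x) by ring, Real.sin_two_mul]
  have hc2 : Real.cos (π * x - π / 2) = Real.sin (π * x) := by
    rw [← Real.cos_neg, neg_sub, Real.cos_pi_div_two_sub]
  have hs2 : Real.sin (π * x - π / 2) = -Real.cos (π * x) := by
    have h1 := Real.sin_neg (π / 2 - π * x)
    rw [neg_sub] at h1
    rw [h1, Real.sin_pi_div_two_sub]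
  rw [hc, hs, hc2, hs2]
  push_cast
  ring

lemma tendsto_log_series {z : ℂ} (hz : ‖z‖ = 1) (hz1 : z ≠ 1) :
    Tendsto (fun M : ℕ => ∑ n ∈ Finset.range M, z ^ (n + 1) / (n + 1)) atTop
      (𝓝 (-Complex.log (1 - z))) := by
  have hzne : (1 : ℂ) - z ≠ 0 := sub_ne_zero.mpr (Ne.symm hz1)
  have hzne' : z - 1 ≠ 0 := sub_ne_zero.mpr hz1
  have hcau : CauchySeq (fun M : ℕ => ∑ n ∈ Finset.range M, z ^ (n + 1) / (n + 1)) := by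
    have hmain := Antitone.cauchySeq_series_mul_of_tendsto_zero_of_bounded
      (f := fun n : ℕ => 1 / (n + 1 : ℝ)) (z := fun n : ℕ => z ^ (n + 1))
      (b := 2 / ‖z - 1‖)
      (fun m n h => by
        apply one_div_le_one_div_of_le (by positivity)
        have : (m : ℝ) ≤ n := Nat.cast_le.mpr h
        linarith)
      (by
        have h1 : Tendsto (fun n : ℕ => (n : ℝ) + 1) atTop atTop :=
          tendsto_atTop_add_const_right _ 1 tendsto_natCast_atTop_atTop
        have h2 : Tendsto (fun n : ℕ => ((n : ℝ) + 1)⁻¹) atTop (𝓝 0) := h1.inv_tendsto_atTop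
        simpa [one_div] using h2)
      (fun n => by
        have hgeom : ∑ i ∈ Finset.range n, z ^ (i + 1) = (z ^ n - 1) / (z - 1) * z := by
          simp only [pow_succ]
          rw [← Finset.sum_mul, geom_sum_eq hz1]
        rw [hgeom, norm_mul, norm_div, hz, mul_one]
        gcongr
        calc ‖z ^ n - 1‖ ≤ ‖z ^ n‖ + ‖(1:ℂ)‖ := norm_sub_le _ _
        _ = 2 := by rw [norm_pow, hz]; norm_num)
    have heq : (fun n : ℕ => ∑ i ∈ Finset.range n,
        (fun n : ℕ => 1 / (n + 1 : ℝ)) i • (fun n : ℕ => z ^ (n + 1)) i)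
        = fun M : ℕ => ∑ n ∈ Finset.range M, z ^ (n + 1) / (n + 1) := by
      funext M
      refine Finset.sum_congr rfl fun i _ => ?_
      push_cast [real_smul]
      rw [one_div, inv_mul_eq_div]
    rwa [heq] at hmain
  obtain ⟨l, hl⟩ := cauchySeq_tendsto_of_complete hcau
  set F : ℕ → ℂ := fun n => z ^ n / n with hF
  have hparts : Tendsto (fun n : ℕ => ∑ i ∈ Finset.range n, F i) atTop (𝓝 l) := by
    rw [← tendsto_add_atTop_iff_nat 1]
    have : (fun n : ℕ => ∑ i ∈ Finset.range (n + 1), F i)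
        = fun M : ℕ => ∑ n ∈ Finset.range M, z ^ (n + 1) / (n + 1) := by
      funext M
      rw [Finset.sum_range_succ']
      simp only [hF, pow_zero, Nat.cast_zero, div_zero, add_zero]
      push_cast
      rfl
    rwa [this]
  have habel := Complex.tendsto_tsum_powerSeries_nhdsWithin_lt hparts
  have hev : ∀ᶠ w in (𝓝[<] (1:ℝ)).map Complex.ofReal,
      (∑' n : ℕ, F n * w ^ n) = -Complex.log (1 - w * z) := by
    rw [eventually_map]
    filter_upwards [Ioo_mem_nhdsLT (by norm_num : (0:ℝ) < 1)] with x hx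
    have hxz : ‖(x : ℂ) * z‖ < 1 := by
      rw [norm_mul, hz, mul_one, Complex.norm_real]
      rw [Set.mem_Ioo] at hx
      rw [Real.norm_eq_abs, abs_lt]; constructor <;> linarith [hx.1, hx.2]
    have hsum := Complex.hasSum_taylorSeries_neg_log hxz
    rw [← hsum.tsum_eq]
    congr 1
    funext n
    rw [hF, mul_pow]
    ring
  have hre : z.re < 1 := by
    rcases lt_or_eq_of_le (Complex.re_le_norm z) with h | h
    · simpa [hz] using h
    · exfalso
      apply hz1
      have h1 : z.re = 1 := by rw [h, hz]
      have h2 : Complex.normSq z = 1 := by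
        have := Complex.sq_norm z
        rw [hz] at this
        linarith [this]
      have h3 : z.im = 0 := by
        have := Complex.normSq_apply z
        rw [h2, h1] at this
        nlinarith
      exact Complex.ext h1 h3
  have hcont : ContinuousAt (fun w : ℂ => -Complex.log (1 - w * z)) 1 := by
    apply ContinuousAt.neg
    apply ContinuousAt.comp (x := (1:ℂ)) (g := Complex.log)
    · apply continuousAt_clog
      rw [Complex.mem_slitPlane_iff]
      left
      simp only [one_mul, Complex.sub_re, Complex.one_re]
      linarith
    · fun_prop
  have h1 : Tendsto Complex.ofReal (𝓝[<] (1:ℝ)) (𝓝 (1:ℂ)) := by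
    have := (Complex.continuous_ofReal.tendsto (1:ℝ)).mono_left
      (nhdsWithin_le_nhds (s := Set.Iio (1:ℝ)))
    simpa using this
  have hlim2 : Tendsto (fun w : ℂ => -Complex.log (1 - w * z)) ((𝓝[<] (1:ℝ)).map Complex.ofReal)
      (𝓝 (-Complex.log (1 - z))) := by
    rw [Filter.tendsto_map'_iff]
    have := hcont.tendsto.comp h1
    simpa using this
  have : l = -Complex.log (1 - z) :=
    tendsto_nhds_unique (habel.congr' hev) hlim2
  rwa [this] at hl
lemma sawtooth_Ioo {x : ℝ} (h0 : 0 < x) (h1 : x < 1) :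
    Tendsto (fun M : ℕ => ∑ n ∈ Finset.range M, Real.sin (2 * π * (n + 1) * x) / (n + 1))
      atTop (𝓝 (π / 2 - π * x)) := by
  set z : ℂ := Complex.exp ((2 * π * x : ℝ) * Complex.I) with hzdef
  have hsinpos : 0 < Real.sin (π * x) :=
    Real.sin_pos_of_pos_of_lt_pi (by positivity) (by nlinarith [Real.pi_pos])
  have hz : ‖z‖ = 1 := Complex.norm_exp_ofReal_mul_I _
  have hkey := one_sub_exp_eq x
  have hz1 : z ≠ 1 := by
    intro h
    rw [← hzdef] at hkey
    rw [h, sub_self] at hkey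
    have := Complex.exp_ne_zero ((π * x - π / 2 : ℝ) * Complex.I)
    have h2 : ((2 * Real.sin (π * x) : ℝ) : ℂ) ≠ 0 := by
      simp only [ne_eq, Complex.ofReal_eq_zero]
      positivity
    exact (mul_ne_zero h2 this) hkey.symm
  have hlog := tendsto_log_series hz hz1
  have him := (Complex.continuous_im.tendsto _).comp hlog
  have heq : (fun M : ℕ => (∑ n ∈ Finset.range M, z ^ (n + 1) / (n + 1)).im)
      = fun M : ℕ => ∑ n ∈ Finset.range M, Real.sin (2 * π * (n + 1) * x) / (n + 1) := by
    funext M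
    rw [Complex.im_sum]
    refine Finset.sum_congr rfl fun n _ => ?_
    have hpow : z ^ (n + 1) = Complex.exp ((2 * π * (n + 1) * x : ℝ) * Complex.I) := by
      rw [hzdef, ← Complex.exp_nat_mul]
      congr 1
      push_cast
      ring
    rw [hpow]
    rw [show ((n : ℂ) + 1) = ((n + 1 : ℝ) : ℂ) by push_cast; ring]
    rw [Complex.div_ofReal_im, Complex.exp_ofReal_mul_I_im]
  have hlogim : (-Complex.log (1 - z)).im = π / 2 - π * x := by
    have hexp : (1 : ℂ) - z =
        Complex.exp (((Real.log (2 * Real.sin (π * x)) : ℝ) : ℂ) + ((π * x - π / 2 : ℝ) : ℂ) * Complex.I) := by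
      rw [Complex.exp_add, hkey]
      congr 1
      rw [← Complex.ofReal_exp, Real.exp_log (by positivity)]
    have him' : (((Real.log (2 * Real.sin (π * x)) : ℝ) : ℂ) + ((π * x - π / 2 : ℝ) : ℂ) * Complex.I).im
        = π * x - π / 2 := by simp
    rw [hexp, Complex.log_exp (by rw [him']; nlinarith [Real.pi_pos]) (by rw [him']; nlinarith [Real.pi_pos])]
    rw [Complex.neg_im, him']
    ring
  rw [hlogim] at him
  have him2 : Tendsto (fun M : ℕ => (∑ n ∈ Finset.range M, z ^ (n + 1) / ((n : ℂ) + 1)).im)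
      atTop (𝓝 (π / 2 - π * x)) := him
  rwa [heq] at him2

lemma sawtooth_frac {x : ℝ} (hx : ∀ k : ℤ, x ≠ (k : ℝ)) :
    Tendsto (fun M : ℕ => ∑ n ∈ Finset.range M, Real.sin (2 * π * (n + 1) * x) / (n + 1))
      atTop (𝓝 (π / 2 - π * Int.fract x)) := by
  have h0 : 0 < Int.fract x := by
    rw [Int.fract_pos]
    exact hx ⌊x⌋
  have h1 : Int.fract x < 1 := Int.fract_lt_one x
  have := sawtooth_Ioo h0 h1
  refine this.congr fun M => Finset.sum_congr rfl fun n _ => ?_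
  congr 1
  have hxe : x = Int.fract x + (⌊x⌋ : ℝ) := by rw [Int.fract]; ring
  conv_rhs => rw [hxe]
  rw [show 2 * π * (↑n + 1) * (Int.fract x + (⌊x⌋ : ℝ))
      = 2 * π * (↑n + 1) * Int.fract x + ((n + 1 : ℤ) * ⌊x⌋ : ℤ) * (2 * π) by push_cast; ring]
  rw [Real.sin_add_int_mul_two_pi]

lemma exp_pair (t : ℝ) :
    Complex.exp ((t : ℝ) * Complex.I) + Complex.exp ((-t : ℝ) * Complex.I)
      = ((2 * Real.cos t : ℝ) : ℂ) := by
  rw [Complex.exp_mul_I, Complex.exp_mul_I, ← Complex.ofReal_cos, ← Complex.ofReal_sin,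
    ← Complex.ofReal_cos, ← Complex.ofReal_sin, Real.cos_neg, Real.sin_neg]
  push_cast
  ring

lemma sinc_neg (x : ℝ) : _root_.sinc (-x) = _root_.sinc x := by
  unfold _root_.sinc
  rcases eq_or_ne x 0 with h | h
  · simp [h]
  · rw [if_neg (neg_ne_zero.mpr h), if_neg h]
    rw [mul_neg, Real.sin_neg, neg_div_neg_eq]

lemma sinc_pair (θ f r : ℝ) (hθ : 0 < θ) (hr : 0 < r) :
    _root_.sinc (r / θ) * (2 * Real.cos (2 * π * r * f / θ))
      = (θ / π) * ((Real.sin (2 * π * r * ((f + 1 / 2) / θ))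
          - Real.sin (2 * π * r * ((f - 1 / 2) / θ))) / r) := by
  have hθ' : θ ≠ 0 := ne_of_gt hθ
  have hr' : r ≠ 0 := ne_of_gt hr
  have hπ : (π : ℝ) ≠ 0 := Real.pi_ne_zero
  have h1 : 2 * π * r * ((f + 1 / 2) / θ) = 2 * π * r * f / θ + π * (r / θ) := by
    field_simp
  have h2 : 2 * π * r * ((f - 1 / 2) / θ) = 2 * π * r * f / θ - π * (r / θ) := by
    field_simp
  rw [h1, h2, Real.sin_add, Real.sin_sub, _root_.sinc, if_neg (by positivity)]
  field_simp
  ring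

/-- Poisson-summation identity (Eq. (15) of the paper): the symmetric partial sums of the
Fourier series of the sampled _root_.sinc taps converge to the θ-periodized rectangular
function `θ · N_θ(f)`, where `N_θ(f) = #{k ∈ ℤ : |f - kθ| < 1/2}`. -/
theorem sampled_sinc_poisson (θ : ℝ) (hθ : 0 < θ) (f : ℝ)
    (hf : ∀ k : ℤ, f - k * θ ≠ -(1 / 2) ∧ f - k * θ ≠ 1 / 2) :
    Tendsto (fun M : ℕ => ∑ ℓ ∈ Finset.Icc (-(M : ℤ)) (M : ℤ),
        (_root_.sinc ((ℓ : ℝ) / θ) : ℂ) * Complex.exp (2 * π * Complex.I * (ℓ : ℂ) * (f : ℂ) / (θ : ℂ)))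
      atTop
      (nhds ((θ : ℂ) * (({k : ℤ | |f - k * θ| < 1 / 2}.ncard : ℕ) : ℂ))) := by
  have hθ' : θ ≠ 0 := ne_of_gt hθ
  have hπ : (π : ℝ) ≠ 0 := Real.pi_ne_zero
  set a : ℝ := (f - 1 / 2) / θ with ha_def
  set b : ℝ := (f + 1 / 2) / θ with hb_def
  have ha : ∀ k : ℤ, a ≠ (k : ℝ) := by
    intro k h
    apply (hf k).2
    rw [ha_def, div_eq_iff hθ'] at h
    linarith
  have hb : ∀ k : ℤ, b ≠ (k : ℝ) := by
    intro k h
    apply (hf k).1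
    rw [hb_def, div_eq_iff hθ'] at h
    linarith
  have hab : a < b := by
    rw [ha_def, hb_def, div_lt_div_iff_of_pos_right hθ]
    linarith
  have Sa := sawtooth_frac ha
  have Sb := sawtooth_frac hb
  set L : ℝ := 1 + (θ / π) * ((π / 2 - π * Int.fract b) - (π / 2 - π * Int.fract a)) with hL_def
  have hT : Tendsto (fun M : ℕ => 1 + (θ / π) *
      ((∑ n ∈ Finset.range M, Real.sin (2 * π * (n + 1) * b) / (n + 1))
        - (∑ n ∈ Finset.range M, Real.sin (2 * π * (n + 1) * a) / (n + 1)))) atTop (𝓝 L) :=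
    tendsto_const_nhds.add ((Sb.sub Sa).const_mul _)
  have key : ∀ M : ℕ, (∑ ℓ ∈ Finset.Icc (-(M : ℤ)) (M : ℤ),
      (_root_.sinc ((ℓ : ℝ) / θ) : ℂ) * Complex.exp (2 * π * Complex.I * (ℓ : ℂ) * (f : ℂ) / (θ : ℂ)))
      = ((1 + (θ / π) * ((∑ n ∈ Finset.range M, Real.sin (2 * π * (n + 1) * b) / (n + 1))
        - (∑ n ∈ Finset.range M, Real.sin (2 * π * (n + 1) * a) / (n + 1))) : ℝ) : ℂ) := by
    intro M
    induction M with
    | zero => simp [_root_.sinc]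
    | succ M ih =>
      have hset : Finset.Icc (-((M + 1 : ℕ) : ℤ)) ((M + 1 : ℕ) : ℤ)
          = insert (-((M : ℤ) + 1)) (insert ((M : ℤ) + 1) (Finset.Icc (-(M : ℤ)) (M : ℤ))) := by
        ext k
        simp only [Finset.mem_Icc, Finset.mem_insert]
        push_cast
        omega
      have hmem1 : ((M : ℤ) + 1) ∉ Finset.Icc (-(M : ℤ)) (M : ℤ) := by
        simp only [Finset.mem_Icc]; omega
      have hmem2 : (-((M : ℤ) + 1)) ∉ insert ((M : ℤ) + 1) (Finset.Icc (-(M : ℤ)) (M : ℤ)) := by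
        simp only [Finset.mem_insert, Finset.mem_Icc]; omega
      rw [hset, Finset.sum_insert hmem2, Finset.sum_insert hmem1, ih]
      have hr : (0 : ℝ) < (M : ℝ) + 1 := by positivity
      have he1 : Complex.exp (2 * π * Complex.I * ((((M : ℤ) + 1) : ℤ) : ℂ) * (f : ℂ) / (θ : ℂ))
          = Complex.exp (((2 * π * ((M : ℝ) + 1) * f / θ : ℝ) : ℂ) * Complex.I) := by
        congr 1
        push_cast
        field_simp
      have he2 : Complex.exp (2 * π * Complex.I * (((-((M : ℤ) + 1)) : ℤ) : ℂ) * (f : ℂ) / (θ : ℂ))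
          = Complex.exp (((-(2 * π * ((M : ℝ) + 1) * f / θ) : ℝ) : ℂ) * Complex.I) := by
        congr 1
        push_cast
        field_simp
      have hs1 : _root_.sinc (((((M : ℤ) + 1) : ℤ) : ℝ) / θ) = _root_.sinc (((M : ℝ) + 1) / θ) := by
        congr 1
        push_cast
        ring
      have hs2 : _root_.sinc ((((-((M : ℤ) + 1)) : ℤ) : ℝ) / θ) = _root_.sinc (((M : ℝ) + 1) / θ) := by
        rw [show (((-((M : ℤ) + 1)) : ℤ) : ℝ) = -((M : ℝ) + 1) by push_cast; ring,
          neg_div, _root_.sinc_neg]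
      rw [he1, he2, hs1, hs2]
      calc ((_root_.sinc (((M : ℝ) + 1) / θ) : ℝ) : ℂ)
            * Complex.exp (((-(2 * π * ((M : ℝ) + 1) * f / θ) : ℝ) : ℂ) * Complex.I)
          + (((_root_.sinc (((M : ℝ) + 1) / θ) : ℝ) : ℂ)
            * Complex.exp (((2 * π * ((M : ℝ) + 1) * f / θ : ℝ) : ℂ) * Complex.I)
          + ((1 + (θ / π) * ((∑ n ∈ Finset.range M, Real.sin (2 * π * (n + 1) * b) / (n + 1))
            - (∑ n ∈ Finset.range M, Real.sin (2 * π * (n + 1) * a) / (n + 1))) : ℝ) : ℂ))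
          = ((_root_.sinc (((M : ℝ) + 1) / θ) : ℝ) : ℂ)
            * (Complex.exp (((2 * π * ((M : ℝ) + 1) * f / θ : ℝ) : ℂ) * Complex.I)
              + Complex.exp (((-(2 * π * ((M : ℝ) + 1) * f / θ) : ℝ) : ℂ) * Complex.I))
          + ((1 + (θ / π) * ((∑ n ∈ Finset.range M, Real.sin (2 * π * (n + 1) * b) / (n + 1))
            - (∑ n ∈ Finset.range M, Real.sin (2 * π * (n + 1) * a) / (n + 1))) : ℝ) : ℂ) := by
            ring
        _ = _ := by
            rw [exp_pair, ← Complex.ofReal_mul,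
              _root_.sinc_pair θ f ((M : ℝ) + 1) hθ hr, ← ha_def, ← hb_def,
              Finset.sum_range_succ, Finset.sum_range_succ]
            push_cast
            ring
  have hfloor : ⌊a⌋ ≤ ⌊b⌋ := Int.floor_le_floor hab.le
  have hset2 : {k : ℤ | |f - k * θ| < 1 / 2} = ↑(Finset.Ioc ⌊a⌋ ⌊b⌋) := by
    ext k
    simp only [Set.mem_setOf_eq, Finset.coe_Ioc, Set.mem_Ioc, abs_lt]
    constructor
    · rintro ⟨h1, h2⟩
      constructor
      · rw [Int.floor_lt, ha_def, div_lt_iff₀ hθ]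
        linarith
      · rw [Int.le_floor, hb_def, le_div_iff₀ hθ]
        linarith
    · rintro ⟨h1, h2⟩
      rw [Int.floor_lt, ha_def, div_lt_iff₀ hθ] at h1
      rw [Int.le_floor, hb_def, le_div_iff₀ hθ] at h2
      refine ⟨lt_of_le_of_ne (by linarith) (Ne.symm (hf k).1), by linarith⟩
  have hcardR : (({k : ℤ | |f - k * θ| < 1 / 2}.ncard : ℕ) : ℝ) = ((⌊b⌋ : ℝ) - (⌊a⌋ : ℝ)) := by
    rw [hset2, Set.ncard_coe_finset, Int.card_Ioc]
    have h1 : ((⌊b⌋ - ⌊a⌋).toNat : ℤ) = ⌊b⌋ - ⌊a⌋ := Int.toNat_of_nonneg (by omega)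
    have h2 : (((⌊b⌋ - ⌊a⌋).toNat : ℤ) : ℝ) = ((⌊b⌋ : ℝ) - (⌊a⌋ : ℝ)) := by
      rw [h1]; push_cast; ring
    rw [← h2]; push_cast; ring
  have hba : b - a = 1 / θ := by
    rw [ha_def, hb_def, div_sub_div_same]
    norm_num
  have hLval : L = θ * ((⌊b⌋ : ℝ) - (⌊a⌋ : ℝ)) := by
    have h1 : (θ / π) * ((π / 2 - π * Int.fract b) - (π / 2 - π * Int.fract a))
        = θ * (Int.fract a - Int.fract b) := by
      field_simp
      ring
    have h2 : θ * (a - b) = -1 := by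
      have h : a - b = -(1 / θ) := by linarith
      rw [h]
      field_simp
    rw [hL_def, h1, Int.fract, Int.fract]
    calc 1 + θ * ((a - ⌊a⌋) - (b - ⌊b⌋))
        = 1 + (θ * (a - b) + θ * (((⌊b⌋ : ℝ)) - ((⌊a⌋ : ℝ)))) := by ring
      _ = θ * ((⌊b⌋ : ℝ) - (⌊a⌋ : ℝ)) := by rw [h2]; ring
  have hfin := (Complex.continuous_ofReal.tendsto L).comp hT
  have hfin2 : Tendsto (fun M : ℕ => ∑ ℓ ∈ Finset.Icc (-(M : ℤ)) (M : ℤ),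
      (_root_.sinc ((ℓ : ℝ) / θ) : ℂ) * Complex.exp (2 * π * Complex.I * (ℓ : ℂ) * (f : ℂ) / (θ : ℂ)))
      atTop (𝓝 ((L : ℝ) : ℂ)) := by
    refine Tendsto.congr (fun M => (key M).symm) hfin
  have hLC : ((L : ℝ) : ℂ) = (θ : ℂ) * (({k : ℤ | |f - k * θ| < 1 / 2}.ncard : ℕ) : ℂ) := by
    rw [hLval, ← hcardR]
    push_cast
    ring
  rwa [hLC] at hfin2
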